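/- Let J be a finite nilpotent group acting by automorphisms on a finite nilpotent group N. For each prime q ∈ D (primes dividing both |J| and |N|), the map H¹(J_q, N_q) → H¹(J_q, N) induced by the inclusion N_q ↪ N is a bijection, where J_q, N_q denote the Sylow q-subgroups. -/

import Mathlib

section

variable {N J : Type*} [Group N] [Group J] (φ : J →* MulAut N)

/-- Crossed homomorphisms `J → N`. -/
def CrossedHom : Type _ := {f : J → N // ∀ j j', f (j * j') = f j * φ j (f j')}

/-- The cohomology relation on crossed homomorphisms. -/
def cohRel (f g : CrossedHom φ) : Prop :=
  ∃ n : N, ∀ j, g.1 j = n⁻¹ * f.1 j * φ j n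

/-- Crossed homomorphisms `J → N` taking values in a subgroup `M ≤ N`. -/
def CrossedHomIn (M : Subgroup N) : Type _ :=
  {f : J → N // (∀ j j', f (j * j') = f j * φ j (f j')) ∧ ∀ j, f j ∈ M}

/-- The cohomology relation for `M`-valued crossed homomorphisms. -/
def cohRelIn (M : Subgroup N) (f g : CrossedHomIn φ M) : Prop :=
  ∃ n ∈ M, ∀ j, g.1 j = n⁻¹ * f.1 j * φ j n

end


open Subgroup QuotientGroup

noncomputable def quotAut {G M : Type*} [Group G] [Group M] (ρ : G →* MulAut M)
    (K : Subgroup M) [K.Normal] (h : ∀ g, K.map (ρ g : M ≃* M) = K) :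
    G →* MulAut (M ⧸ K) :=
  MonoidHom.mk' (fun g => QuotientGroup.congr K K (ρ g) (h g)) (by
    intro a b
    ext x
    induction x using QuotientGroup.induction_on with
    | _ z => simp [QuotientGroup.congr_mk, MulAut.mul_apply])

@[simp] lemma quotAut_mk {G M : Type*} [Group G] [Group M] (ρ : G →* MulAut M)
    (K : Subgroup M) [K.Normal] (h : ∀ g, K.map (ρ g : M ≃* M) = K) (g : G) (x : M) :
    quotAut ρ K h g (QuotientGroup.mk x) = QuotientGroup.mk (ρ g x) :=
  QuotientGroup.congr_mk K K (ρ g) (h g) x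

lemma twist_cocycle {G M : Type*} [Group G] [Group M] (ρ : G →* MulAut M)
    (f : G → M) (hf : ∀ j k, f (j * k) = f j * ρ j (f k)) (c : M) :
    ∀ j k, (fun j => c * f j * (ρ j c)⁻¹) (j * k) =
      (fun j => c * f j * (ρ j c)⁻¹) j * ρ j ((fun j => c * f j * (ρ j c)⁻¹) k) := by
  intro j k
  simp only [hf, map_mul, map_inv, MonoidHom.map_mul, MulAut.mul_apply]
  group



open scoped IsMulCommutative in
/-- Vanishing of nonabelian H¹ with coprime nilpotent coefficients. -/
lemma h1_vanish {J : Type*} [Group J] [Finite J] (M : Type u) [Group M]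
    [Group.IsNilpotent M] : ∀ [Finite M],
    (Nat.card J).Coprime (Nat.card M) →
    ∀ (ρ : J →* MulAut M) (f : J → M), (∀ j k, f (j * k) = f j * ρ j (f k)) →
    ∃ c : M, ∀ j, f j = c⁻¹ * ρ j c := by
  refine nilpotent_center_quotient_ind
    (P := fun M _ _ => ∀ [Finite M],
      (Nat.card J).Coprime (Nat.card M) →
      ∀ (ρ : J →* MulAut M) (f : J → M), (∀ j k, f (j * k) = f j * ρ j (f k)) →
      ∃ c : M, ∀ j, f j = c⁻¹ * ρ j c) M
    (fun M _ _ => fun _ _ _ _ => ⟨1, fun j => Subsingleton.elim _ _⟩) ?_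
  clear! M
  intro M _ _ ih _ hco ρ f hf
  classical
  set Z := Subgroup.center M with hZ
  have hmap : ∀ j : J, Z.map ((ρ j : M ≃* M) : M →* M) = Z :=
    fun j => Subgroup.characteristic_iff_map_eq.mp inferInstance (ρ j)
  set ρ' : J →* MulAut (M ⧸ Z) := quotAut ρ Z hmap with hρ'
  have hcop' : (Nat.card J).Coprime (Nat.card (M ⧸ Z)) :=
    Nat.Coprime.coprime_dvd_right (Subgroup.card_quotient_dvd_card Z) hco
  have hfbar : ∀ j k, (QuotientGroup.mk (f (j * k)) : M ⧸ Z) =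
      QuotientGroup.mk (f j) * ρ' j (QuotientGroup.mk (f k)) := by
    intro j k
    rw [hf, hρ', quotAut_mk, QuotientGroup.mk_mul]
  obtain ⟨cb, hcb⟩ := ih hcop' ρ' (fun j => QuotientGroup.mk (f j)) hfbar
  obtain ⟨c, rfl⟩ := QuotientGroup.mk_surjective cb
  set g : J → M := fun j => c * f j * (ρ j c)⁻¹ with hg
  have hgc : ∀ j k, g (j * k) = g j * ρ j (g k) := twist_cocycle ρ f hf c
  have hgZ : ∀ j, g j ∈ Z := by
    intro j
    rw [← QuotientGroup.eq_one_iff]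
    show (QuotientGroup.mk (c * f j * (ρ j c)⁻¹) : M ⧸ Z) = 1
    have h2 : (QuotientGroup.mk (ρ j c) : M ⧸ Z) = ρ' j (QuotientGroup.mk c) :=
      (quotAut_mk ρ Z hmap j c).symm
    rw [QuotientGroup.mk_mul, QuotientGroup.mk_inv, h2, QuotientGroup.mk_mul, hcb j]
    exact mul_inv_eq_one.mpr (mul_inv_cancel_left _ _)
  -- abelian averaging in the center
  have := Fintype.ofFinite J
  set m := Nat.card J with hm
  have hτmem : ∀ (j : J) (z : M), z ∈ Z → ρ j z ∈ Z := by
    intro j z hz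
    rw [← hmap j]
    exact Subgroup.mem_map_of_mem _ hz
  set τ : J → (Z →* Z) := fun j =>
    MonoidHom.codRestrict (((ρ j : M ≃* M) : M →* M).comp Z.subtype) Z
      (fun z => hτmem j z z.2) with hτ
  set F : J → Z := fun j => ⟨g j, hgZ j⟩ with hF
  have hFc : ∀ j k, F (j * k) = F j * τ j (F k) := by
    intro j k
    ext
    exact hgc j k
  set S : Z := ∏ j : J, F j with hS
  have key : ∀ j, F j ^ m = S * (τ j S)⁻¹ := by
    intro j
    have h1 : ∏ k : J, F (j * k) = S := by
      rw [hS]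
      exact Equiv.prod_comp (Equiv.mulLeft j) F
    have h2 : ∏ k : J, F (j * k) = F j ^ m * τ j S := by
      simp only [hFc]
      rw [Finset.prod_mul_distrib, Finset.prod_const, map_prod]
      congr 1
      rw [Finset.card_univ, hm, Nat.card_eq_fintype_card]
    rw [h1] at h2
    exact eq_mul_inv_of_mul_eq h2.symm
  have hcopZ : (Nat.card Z).Coprime m :=
    ((Nat.Coprime.coprime_dvd_right (Subgroup.card_subgroup_dvd_card Z) hco).symm)
  obtain ⟨u, hum⟩ : ∃ u : Z, u ^ m = S :=
    ⟨(powCoprime hcopZ).symm S, (powCoprime hcopZ).apply_symm_apply S⟩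
  have pow_inj : Function.Injective (fun z : Z => z ^ m) := (powCoprime hcopZ).injective
  have hFj : ∀ j, F j = u * (τ j u)⁻¹ := by
    intro j
    have hpows : F j ^ m = (u * (τ j u)⁻¹) ^ m := by
      rw [key j, mul_pow, inv_pow, ← map_pow, hum]
    exact pow_inj hpows
  refine ⟨(u : M)⁻¹ * c, fun j => ?_⟩
  have hgj : c * f j * (ρ j c)⁻¹ = (u : M) * (ρ j (u : M))⁻¹ := by
    have := congrArg (Subtype.val) (hFj j)
    exact this
  have h3 : f j = c⁻¹ * (c * f j * (ρ j c)⁻¹) * ρ j c := by group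
  rw [hgj] at h3
  rw [map_mul, map_inv, h3]
  group


lemma exists_qpart {G : Type*} [Group G] [Finite G] {q : ℕ} (hq : q.Prime) (x : G) :
    ∃ a b : G, x = a * b ∧ Commute a b ∧ a ∈ zpowers x ∧ b ∈ zpowers x ∧
      (∃ v : ℕ, orderOf a ∣ q ^ v) ∧ ¬ q ∣ orderOf b := by
  have ho : orderOf x ≠ 0 := (orderOf_pos x).ne'
  have hom : q ^ ((orderOf x).factorization q) * ordCompl[q] (orderOf x) = orderOf x :=
    Nat.ordProj_mul_ordCompl_eq_self (orderOf x) q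
  have hcop : Nat.Coprime (q ^ ((orderOf x).factorization q)) (ordCompl[q] (orderOf x)) :=
    Nat.Coprime.pow_left _ (Nat.coprime_ordCompl hq ho)
  obtain ⟨k, hk1, hk0⟩ := Nat.chineseRemainder hcop 1 0
  set v := (orderOf x).factorization q
  set m := ordCompl[q] (orderOf x) with hm
  refine ⟨x ^ k, (x ^ k)⁻¹ * x, by group, ?_, pow_mem (mem_zpowers x) k,
    mul_mem (inv_mem (pow_mem (mem_zpowers x) k)) (mem_zpowers x), ⟨v, ?_⟩, ?_⟩
  · exact ((Commute.refl (x ^ k)).inv_right).mul_right ((Commute.refl x).pow_left k)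
  · -- orderOf (x ^ k) ∣ q ^ v
    apply orderOf_dvd_of_pow_eq_one
    rw [← pow_mul]
    apply orderOf_dvd_iff_pow_eq_one.mp
    obtain ⟨t, rfl⟩ := (Nat.modEq_zero_iff_dvd).mp hk0
    exact ⟨t, by rw [← hom]; ring⟩
  · -- ¬ q ∣ orderOf ((x ^ k)⁻¹ * x)
    have hb : (x ^ k)⁻¹ * x = x ^ ((1 : ℤ) - (k : ℤ)) := by
      rw [zpow_sub, zpow_one, zpow_natCast]
      exact (((Commute.refl x).pow_left k).inv_left).eq
    have hdvd : orderOf ((x ^ k)⁻¹ * x) ∣ m := by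
      apply orderOf_dvd_of_pow_eq_one
      rw [hb, ← zpow_natCast, ← zpow_mul]
      apply orderOf_dvd_iff_zpow_eq_one.mp
      have h1 : ((q : ℤ) ^ v) ∣ (1 : ℤ) - (k : ℤ) := by
        have := hk1.dvd
        push_cast at this ⊢
        exact_mod_cast this
      obtain ⟨s, hs⟩ := h1
      refine ⟨s, ?_⟩
      rw [← hom]
      push_cast
      rw [hs]
      ring
    intro hqd
    exact (Nat.Prime.coprime_iff_not_dvd hq).mp (Nat.coprime_ordCompl hq ho)
      (hqd.trans hdvd)

/-- Any element whose order is a prime power `q ^ v` lies in the normal Sylow `q`-subgroup. -/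
lemma mem_normal_sylow {G : Type*} [Group G] [Finite G] {q : ℕ} (hq : Fact q.Prime)
    (P : Sylow q G) (hP : (P : Subgroup G).Normal) {x : G} {v : ℕ}
    (hx : orderOf x ∣ q ^ v) : x ∈ (P : Subgroup G) := by
  obtain ⟨i, -, hi⟩ := (Nat.dvd_prime_pow hq.out).mp hx
  have hpg : IsPGroup q (zpowers x) := IsPGroup.of_card (by rw [Nat.card_zpowers, hi])
  obtain ⟨Q, hQ⟩ := hpg.exists_le_sylow
  haveI := Sylow.unique_of_normal P hP
  have : Q = P := Subsingleton.elim _ _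
  exact (this ▸ hQ) (mem_zpowers x)

/-- In a finite nilpotent group, an element of order coprime to `q` commutes with every
element of the Sylow `q`-subgroup. -/
lemma commute_of_coprime {G : Type*} [Group G] [Finite G] [Group.IsNilpotent G] {q : ℕ}
    (hq : q.Prime) (P : Sylow q G) {a x : G} (ha : a ∈ (P : Subgroup G))
    (hx : ¬ q ∣ orderOf x) : Commute a x := by
  have hNorm : ∀ (p : ℕ) (_ : Fact p.Prime) (Q : Sylow p G), (Q : Subgroup G).Normal :=
    ((@isNilpotent_of_finite_tfae G _ _).out 0 3).mp ‹Group.IsNilpotent G›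
  suffices H : ∀ n, ∀ x : G, orderOf x < n → ¬ q ∣ orderOf x → Commute a x by
    exact H (orderOf x + 1) x (Nat.lt_succ_self _) hx
  intro n
  induction n with
  | zero => exact fun x hlt _ => absurd hlt (Nat.not_lt_zero _)
  | succ n ih =>
    intro x hlt hx
    rcases eq_or_ne (orderOf x) 1 with h1 | h1
    · rw [orderOf_eq_one_iff.mp h1]; exact Commute.one_right a
    obtain ⟨r, hr, hrd⟩ := Nat.exists_prime_and_dvd h1
    have hrq : r ≠ q := by rintro rfl; exact hx hrd
    obtain ⟨c, b, hx_eq, hcb, hcz, hbz, ⟨v, hcv⟩, hbord⟩ := exists_qpart hr x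
    haveI : Fact r.Prime := ⟨hr⟩
    obtain ⟨R⟩ : Nonempty (Sylow r G) := inferInstance
    have hcR : c ∈ (R : Subgroup G) := mem_normal_sylow ⟨hr⟩ R (hNorm r ⟨hr⟩ R) hcv
    -- elements of P and R commute
    have hPR : ∀ y ∈ (P : Subgroup G), ∀ z ∈ (R : Subgroup G), Commute y z := by
      intro y hy z hz
      have hPn := hNorm q ⟨hq⟩ P
      have hRn := hNorm r ⟨hr⟩ R
      have hmem1 : y⁻¹ * z⁻¹ * y * z ∈ (R : Subgroup G) := by
        have h := hRn.conj_mem z⁻¹ (inv_mem hz) y⁻¹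
        rw [inv_inv] at h
        exact mul_mem h hz
      have hmem2 : y⁻¹ * z⁻¹ * y * z ∈ (P : Subgroup G) := by
        have h := hPn.conj_mem y hy z⁻¹
        rw [inv_inv] at h
        have := mul_mem (inv_mem hy) h
        simpa [mul_assoc] using this
      have horder : y⁻¹ * z⁻¹ * y * z = 1 := by
        obtain ⟨kq, hkq⟩ := P.isPGroup' ⟨_, hmem2⟩
        obtain ⟨kr, hkr⟩ := R.isPGroup' ⟨_, hmem1⟩
        have h1 : orderOf (y⁻¹ * z⁻¹ * y * z) ∣ q ^ kq :=
          orderOf_dvd_of_pow_eq_one (by simpa using congrArg Subtype.val hkq)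
        have h2 : orderOf (y⁻¹ * z⁻¹ * y * z) ∣ r ^ kr :=
          orderOf_dvd_of_pow_eq_one (by simpa using congrArg Subtype.val hkr)
        have hco : Nat.Coprime (q ^ kq) (r ^ kr) :=
          Nat.coprime_pow_primes kq kr hq hr hrq.symm
        have := Nat.dvd_gcd h1 h2
        rw [Nat.Coprime] at hco
        rw [hco, Nat.dvd_one] at this
        exact orderOf_eq_one_iff.mp this
      have h2 := congrArg (fun w => z * y * w) horder
      simp only [mul_one] at h2
      have : y * z = z * y := by
        calc y * z = z * y * (y⁻¹ * z⁻¹ * y * z) := by group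
        _ = z * y := by rw [horder, mul_one]
      exact this
    -- order bookkeeping for the recursive call
    have hbdvd : orderOf b ∣ orderOf x := orderOf_dvd_of_mem_zpowers hbz
    have hqb : ¬ q ∣ orderOf b := fun h => hx (h.trans hbdvd)
    have hbcompl : orderOf b ∣ ordCompl[r] (orderOf x) :=
      Nat.dvd_ordCompl_of_dvd_not_dvd hbdvd hbord
    have hox : orderOf x ≠ 0 := (orderOf_pos x).ne'
    have hblt : orderOf b < orderOf x := by
      have hvpos : 0 < (orderOf x).factorization r :=
        Nat.Prime.factorization_pos_of_dvd hr hox hrd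
      have hcompl_lt : ordCompl[r] (orderOf x) < orderOf x :=
        Nat.div_lt_self (Nat.pos_of_ne_zero hox)
          (Nat.one_lt_pow hvpos.ne' hr.one_lt)
      exact lt_of_le_of_lt (Nat.le_of_dvd (Nat.ordCompl_pos r hox) hbcompl) hcompl_lt
    have hab : Commute a b := ih b (by omega) hqb
    have hac : Commute a c := hPR a ha c hcR
    rw [hx_eq]
    exact hac.mul_right hab


section Helpers
variable {N J : Type*} [Group N] [Group J] (φ : J →* MulAut N)

lemma cohRel_equivalence : Equivalence (cohRel φ) where
  refl f := ⟨1, fun j => by simp⟩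
  symm := by
    rintro f g ⟨n, hn⟩
    exact ⟨n⁻¹, fun j => by rw [hn j, map_inv]; group⟩
  trans := by
    rintro f g h ⟨n, hn⟩ ⟨n', hn'⟩
    exact ⟨n * n', fun j => by rw [hn' j, hn j]; simp only [map_mul]; group⟩

end Helpers


/-- For finite nilpotent `J`, `N` with `J` acting on `N`, and a prime `q` dividing
both `|J|` and `|N|`, the inclusion `N_q ↪ N` induces a bijection
`H¹(J_q, N_q) ≅ H¹(J_q, N)`, where `J_q`, `N_q` are the Sylow `q`-subgroups. -/
theorem stmt_9 {N J : Type*} [Group N] [Group J] [Finite N] [Finite J]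
    [Group.IsNilpotent N] [Group.IsNilpotent J]
    (φ : J →* MulAut N) (q : ℕ) (hq : q.Prime)
    (hqJ : q ∣ Nat.card J) (hqN : q ∣ Nat.card N)
    (Jq : Sylow q J) (Nq : Sylow q N)
    (hNq : ∀ (j : J) (n : N), n ∈ (Nq : Subgroup N) → φ j n ∈ (Nq : Subgroup N)) :
    ∃ e : Quot (cohRelIn (φ.comp (Jq : Subgroup J).subtype) (Nq : Subgroup N)) ≃
        Quot (cohRel (φ.comp (Jq : Subgroup J).subtype)),
      ∀ (f : CrossedHomIn (φ.comp (Jq : Subgroup J).subtype) (Nq : Subgroup N))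
        (g : CrossedHom (φ.comp (Jq : Subgroup J).subtype)),
        g.1 = f.1 → e (Quot.mk _ f) = Quot.mk _ g := by
  classical
  haveI hqf : Fact q.Prime := ⟨hq⟩
  set φ' := φ.comp (Jq : Subgroup J).subtype with hφ'
  have hNorm : ∀ (p : ℕ) (_ : Fact p.Prime) (Q : Sylow p N), (Q : Subgroup N).Normal :=
    ((@isNilpotent_of_finite_tfae N _ _).out 0 3).mp ‹Group.IsNilpotent N›
  haveI hNqn : (Nq : Subgroup N).Normal := hNorm q ⟨hq⟩ Nq
  let to_ : CrossedHomIn φ' (Nq : Subgroup N) → CrossedHom φ' := fun f => ⟨f.1, f.2.1⟩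
  let E : Quot (cohRelIn φ' (Nq : Subgroup N)) → Quot (cohRel φ') :=
    Quot.lift (fun f => Quot.mk _ (to_ f))
      (fun f g h => Quot.sound (by obtain ⟨n, -, hn⟩ := h; exact ⟨n, hn⟩))
  have hinj : Function.Injective E := by
    intro x y
    refine Quot.induction_on₂ x y ?_
    intro f₁ f₂ hE
    have hrel : cohRel φ' (to_ f₁) (to_ f₂) :=
      ((cohRel_equivalence φ').eqvGen_iff).mp (Quot.eqvGen_exact hE)
    obtain ⟨n, hn⟩ := hrel
    obtain ⟨a, b, hnab, hab, haz, hbz, ⟨v, hav⟩, hbq⟩ := exists_qpart hq n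
    have haNq : a ∈ (Nq : Subgroup N) := mem_normal_sylow ⟨hq⟩ Nq hNqn hav
    apply Quot.sound
    refine ⟨a, haNq, fun j => ?_⟩
    set h := a⁻¹ * f₁.1 j * φ' j a with hh
    have hmemh : h ∈ (Nq : Subgroup N) :=
      mul_mem (mul_mem (inv_mem haNq) (f₁.2.2 j)) (hNq _ a haNq)
    have e1 : f₂.1 j = b⁻¹ * h * φ' j b := by
      rw [hn j, hnab, map_mul, hh]; group; rfl
    have hbh : b⁻¹ * h = h * b⁻¹ :=
      ((commute_of_coprime hq Nq hmemh hbq).inv_right).eq.symm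
    set z := b⁻¹ * φ' j b with hzdef
    have e2 : b⁻¹ * h * φ' j b = h * z := by rw [hbh, mul_assoc, hzdef]
    have hzNq : z ∈ (Nq : Subgroup N) := by
      have : z = h⁻¹ * f₂.1 j := by rw [e1, e2]; group
      rw [this]
      exact mul_mem (inv_mem hmemh) (f₂.2.2 j)
    have hz1 : z = 1 := by
      have hzb : Commute z b := commute_of_coprime hq Nq hzNq hbq
      have hordeq : orderOf (φ' j b) = orderOf b :=
        orderOf_injective (φ' j).toMonoidHom (φ' j).injective b
      have hfb : φ' j b = b * z := by rw [hzdef]; group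
      have h1 : (φ' j b) ^ orderOf b = 1 := by
        rw [← hordeq]; exact pow_orderOf_eq_one _
      rw [hfb, (hzb.symm).mul_pow, pow_orderOf_eq_one, one_mul] at h1
      have hzob : orderOf z ∣ orderOf b := orderOf_dvd_of_pow_eq_one h1
      obtain ⟨k, hk⟩ := Nq.isPGroup' ⟨z, hzNq⟩
      have hzqk : orderOf z ∣ q ^ k :=
        orderOf_dvd_of_pow_eq_one (by simpa using congrArg Subtype.val hk)
      have hcoz : Nat.Coprime (q ^ k) (orderOf b) :=
        Nat.Coprime.pow_left k ((hq.coprime_iff_not_dvd).mpr hbq)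
      have := Nat.dvd_gcd hzqk hzob
      rw [Nat.Coprime] at hcoz
      rw [hcoz, Nat.dvd_one] at this
      exact orderOf_eq_one_iff.mp this
    rw [e1, e2, hz1, mul_one]
  have hsurj : Function.Surjective E := by
    intro y
    refine Quot.induction_on y ?_
    intro g
    have hmapNq : ∀ jj : (Jq : Subgroup J),
        (Nq : Subgroup N).map ((φ' jj : N ≃* N) : N →* N) = (Nq : Subgroup N) := by
      intro jj
      apply le_antisymm
      · rintro _ ⟨n, hn, rfl⟩
        exact hNq _ n hn
      · intro n hn
        refine ⟨φ (↑jj)⁻¹ n, hNq _ n hn, ?_⟩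
        show φ' jj (φ (↑jj)⁻¹ n) = n
        rw [hφ']
        simp only [MonoidHom.comp_apply, Subgroup.coe_subtype]
        rw [← MulAut.mul_apply, ← map_mul, mul_inv_cancel, map_one, MulAut.one_apply]
    let ρ' := quotAut φ' (Nq : Subgroup N) hmapNq
    obtain ⟨s, hs⟩ := IsPGroup.iff_card.mp Jq.isPGroup'
    have hqnd : ¬ q ∣ (Nq : Subgroup N).index :=
      Sylow.not_dvd_index' Nq (Subgroup.index_ne_zero_of_finite)
    have hcop : (Nat.card (Jq : Subgroup J)).Coprime (Nat.card (N ⧸ (Nq : Subgroup N))) := by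
      rw [hs, ← Subgroup.index_eq_card]
      exact Nat.Coprime.pow_left s ((hq.coprime_iff_not_dvd).mpr hqnd)
    have hcoc : ∀ j k : (Jq : Subgroup J),
        (QuotientGroup.mk (g.1 (j * k)) : N ⧸ (Nq : Subgroup N)) =
          QuotientGroup.mk (g.1 j) * ρ' j (QuotientGroup.mk (g.1 k)) := by
      intro j k
      rw [g.2 j k, QuotientGroup.mk_mul]
      congr 1
    obtain ⟨cb, hcb⟩ := h1_vanish (N ⧸ (Nq : Subgroup N)) hcop ρ'
      (fun j => QuotientGroup.mk (g.1 j)) hcoc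
    obtain ⟨c, rfl⟩ := QuotientGroup.mk_surjective cb
    have hg'c := twist_cocycle φ' g.1 g.2 c
    have hg'Nq : ∀ j, (fun j => c * g.1 j * (φ' j c)⁻¹) j ∈ (Nq : Subgroup N) := by
      intro j
      rw [← QuotientGroup.eq_one_iff]
      show (QuotientGroup.mk (c * g.1 j * (φ' j c)⁻¹) : N ⧸ (Nq : Subgroup N)) = 1
      have h2 : (QuotientGroup.mk (φ' j c) : N ⧸ (Nq : Subgroup N)) =
          ρ' j (QuotientGroup.mk c) := (quotAut_mk φ' (Nq : Subgroup N) hmapNq j c).symm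
      rw [QuotientGroup.mk_mul, QuotientGroup.mk_inv, h2, QuotientGroup.mk_mul, hcb j]
      group
    refine ⟨Quot.mk _ ⟨fun j => c * g.1 j * (φ' j c)⁻¹, hg'c, hg'Nq⟩, ?_⟩
    apply Quot.sound
    refine ⟨c, fun j => ?_⟩
    show g.1 j = c⁻¹ * (c * g.1 j * (φ' j c)⁻¹) * φ' j c
    group
  refine ⟨Equiv.ofBijective E ⟨hinj, hsurj⟩, fun f g hg => ?_⟩
  show E (Quot.mk _ f) = Quot.mk _ g
  have : g = to_ f := Subtype.ext hg
  rw [this]
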